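/- Order preservation of the Version 1 dynamics (core of Lemma 'inBet'): assume 1 − τρ̄′(z)z > 0 for all z ∈ ℝ. Let (Eₙ) and (E′ₙ) be two trajectories of the Version 1 dynamics driven by the same orders (x₀,…,x_N), i.e. Eₙ⁺ = Eₙ + xₙ, E_{n+1} = ā(Eₙ⁺)Eₙ⁺ and likewise for E′. If E′₀ ≤ E₀, then E′ₙ ≤ Eₙ and E′ₙ⁺ ≤ Eₙ⁺ for all n ∈ {0,…,N}. -/

import Mathlib

open Real

/-- Version 1 dynamics with a general initial value `e₀`:
`E₀ = e₀`, `E_{n+1} = exp(−τρ̄(Eₙ + xₙ))·(Eₙ + xₙ)`. -/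
noncomputable def EvI (τ : ℝ) (ρ : ℝ → ℝ) (x : ℕ → ℝ) (e₀ : ℝ) : ℕ → ℝ
  | 0 => e₀
  | n + 1 =>
      Real.exp (-(τ * ρ (EvI τ ρ x e₀ n + x n))) * (EvI τ ρ x e₀ n + x n)

lemma step_mono (τ : ℝ) (ρ : ℝ → ℝ) (hρ : ContDiff ℝ 1 ρ)
    (h : ∀ z : ℝ, 0 < 1 - τ * deriv ρ z * z) :
    StrictMono (fun z : ℝ => Real.exp (-(τ * ρ z)) * z) := by
  have hd : ∀ z : ℝ, HasDerivAt (fun z : ℝ => Real.exp (-(τ * ρ z)) * z)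
      (Real.exp (-(τ * ρ z)) * (1 - τ * deriv ρ z * z)) z := by
    intro z
    have hρd : HasDerivAt ρ (deriv ρ z) z :=
      (hρ.differentiable one_ne_zero z).hasDerivAt
    have h1 : HasDerivAt (fun z : ℝ => Real.exp (-(τ * ρ z)))
        (Real.exp (-(τ * ρ z)) * (-(τ * deriv ρ z))) z := by
      have := ((hρd.const_mul τ).neg).exp
      simpa using this
    have := h1.mul (hasDerivAt_id z)
    refine this.congr_deriv ?_
    simp only [id]
    ring
  apply strictMono_of_deriv_pos
  intro z
  rw [(hd z).deriv]
  exact mul_pos (Real.exp_pos _) (h z)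

/-- Order preservation of the Version 1 dynamics: if `1 − τρ̄′(z)z > 0` for all `z`,
two trajectories driven by the same orders preserve their initial order:
`E′₀ ≤ E₀` implies `E′ₙ ≤ Eₙ` and `E′ₙ + xₙ ≤ Eₙ + xₙ` for all `n ≤ N`. -/
theorem version1_dynamics_order_preserving
    (τ : ℝ) (hτ : 0 < τ) (ρ : ℝ → ℝ) (hρ : ContDiff ℝ 1 ρ)
    (h : ∀ z : ℝ, 0 < 1 - τ * deriv ρ z * z)
    (N : ℕ) (hN : 1 ≤ N) (x : ℕ → ℝ)
    (e₀ e₀' : ℝ) (he : e₀' ≤ e₀) :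
    ∀ n ≤ N, EvI τ ρ x e₀' n ≤ EvI τ ρ x e₀ n ∧
      EvI τ ρ x e₀' n + x n ≤ EvI τ ρ x e₀ n + x n := by
  have mono := (step_mono τ ρ hρ h).monotone
  have key : ∀ n, EvI τ ρ x e₀' n ≤ EvI τ ρ x e₀ n := by
    intro n
    induction n with
    | zero => exact he
    | succ n ih =>
      show Real.exp (-(τ * ρ (EvI τ ρ x e₀' n + x n))) * (EvI τ ρ x e₀' n + x n) ≤ _
      exact mono (by linarith)
  intro n _
  exact ⟨key n, by linarith [key n]⟩
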